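/- (Boundedness is independent of the total risk.) Let ρ₁, …, ρₙ be distortion risk measures that are finite and norm-continuous on Lᵖ (p ∈ [1, ∞)) and let λ₁, …, λₙ > 0. If inf{Σᵢ λᵢ ρᵢ(Xᵢ) : X₁ + ⋯ + Xₙ = X₀} > −∞ for some X₀ ∈ Lᵖ that is bounded below, then inf{Σᵢ λᵢ ρᵢ(Xᵢ) : X₁ + ⋯ + Xₙ = X₀′} > −∞ for every X₀′ ∈ Lᵖ that is bounded below. -/

import Mathlib

open MeasureTheory Filter
open scoped ENNReal Pointwise Classical Topology

noncomputable section

variable {Ω : Type*} [MeasurableSpace Ω]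


/-- `VaR_t(X) = inf {x ∈ ℝ | P(X > x) ≤ 1 − t}`. -/
def VaR (P : Measure Ω) (X : Ω → ℝ) (t : ℝ) : ℝ :=
  sInf {x : ℝ | P {ω | x < X ω} ≤ ENNReal.ofReal (1 - t)}

/-- A distortion kernel: a nondecreasing right-continuous `Φ : [0,1] → [0,1]` with
`Φ(0) = 0` and `Φ(1) = 1`, modelled as a Stieltjes function on `ℝ` extended by `0`
to the left of `0` and by `1` to the right of `1`. -/
structure DistortionKernel where
  toStieltjes : StieltjesFunction ℝ
  zero_of_nonpos : ∀ x : ℝ, x ≤ 0 → toStieltjes x = 0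
  one_of_one_le : ∀ x : ℝ, 1 ≤ x → toStieltjes x = 1

/-- The distortion risk measure `ρ_Φ(X) = ∫₀¹ VaR_t(X) dΦ(t)` (integral against the
Lebesgue–Stieltjes measure of `Φ`). -/
def distortionRisk (P : Measure Ω) (K : DistortionKernel) (X : Ω → ℝ) : ℝ :=
  ∫ t in Set.Ioc (0 : ℝ) 1, VaR P X t ∂K.toStieltjes.measure

/-- The cumulative distribution function `F_X(x) = P(X ≤ x)`. -/
def cdf (P : Measure Ω) (X : Ω → ℝ) (x : ℝ) : ℝ :=
  (P {ω | X ω ≤ x}).toReal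

section Helpers

variable {P : Measure Ω} [IsProbabilityMeasure P]

/-- The defining set of `VaR`. -/
def VaRSet (P : Measure Ω) (X : Ω → ℝ) (t : ℝ) : Set ℝ :=
  {x : ℝ | P {ω | x < X ω} ≤ ENNReal.ofReal (1 - t)}

lemma VaR_eq_sInf (P : Measure Ω) (X : Ω → ℝ) (t : ℝ) :
    VaR P X t = sInf (VaRSet P X t) := rfl

lemma tail_anti (X : Ω → ℝ) : Antitone (fun x => P {ω | x < X ω}) := by
  intro a b hab
  exact measure_mono (fun ω hω => lt_of_le_of_lt hab hω)

lemma exists_tail_le (X : Ω → ℝ) (hX : AEMeasurable X P) {c : ℝ≥0∞} (hc : 0 < c) :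
    ∃ x : ℝ, P {ω | x < X ω} ≤ c := by
  have hmeas : ∀ n : ℕ, NullMeasurableSet {ω | (n : ℝ) < X ω} P := by
    intro n
    exact hX.nullMeasurable measurableSet_Ioi
  have hanti : Antitone (fun n : ℕ => {ω | (n : ℝ) < X ω}) := by
    intro a b hab ω hω
    simp only [Set.mem_setOf_eq] at hω ⊢
    have : (a : ℝ) ≤ b := Nat.cast_le.mpr hab
    linarith
  have hempty : ⋂ n : ℕ, {ω | (n : ℝ) < X ω} = ∅ := by
    ext ω
    simp only [Set.mem_iInter, Set.mem_setOf_eq, Set.mem_empty_iff_false, iff_false, not_forall,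
      not_lt]
    obtain ⟨n, hn⟩ := exists_nat_gt (X ω)
    exact ⟨n, hn.le⟩
  have htend := tendsto_measure_iInter_atTop hmeas hanti ⟨0, measure_ne_top _ _⟩
  rw [hempty, measure_empty] at htend
  obtain ⟨n, hn⟩ := (htend.eventually_lt_const hc).exists
  exact ⟨n, hn.le⟩

lemma exists_tail_gt (X : Ω → ℝ) {c : ℝ≥0∞} (hc : c < 1) :
    ∃ x : ℝ, c < P {ω | x < X ω} := by
  have hmono : Monotone (fun n : ℕ => {ω | (-(n : ℝ)) < X ω}) := by
    intro a b hab ω hω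
    simp only [Set.mem_setOf_eq] at hω ⊢
    have : (a : ℝ) ≤ b := Nat.cast_le.mpr hab
    linarith
  have huniv : ⋃ n : ℕ, {ω | (-(n : ℝ)) < X ω} = Set.univ := by
    ext ω
    simp only [Set.mem_iUnion, Set.mem_setOf_eq, Set.mem_univ, iff_true]
    obtain ⟨n, hn⟩ := exists_nat_gt (-X ω)
    exact ⟨n, by linarith⟩
  have htend := tendsto_measure_iUnion_atTop (μ := P) hmono
  rw [huniv, measure_univ] at htend
  obtain ⟨n, hn⟩ := (htend.eventually_const_lt hc).exists
  exact ⟨-(n : ℝ), hn⟩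

lemma varSet_nonempty_of_lt_one (X : Ω → ℝ) (hX : AEMeasurable X P) {t : ℝ} (ht : t < 1) :
    (VaRSet P X t).Nonempty := by
  obtain ⟨x, hx⟩ := exists_tail_le X hX (c := ENNReal.ofReal (1 - t))
    (by rw [ENNReal.ofReal_pos]; linarith)
  exact ⟨x, hx⟩

lemma varSet_nonempty_of_bdd (X : Ω → ℝ) {M t : ℝ} (hM : ∀ᵐ ω ∂P, X ω ≤ M) :
    (VaRSet P X t).Nonempty := by
  refine ⟨M, ?_⟩
  have : P {ω | M < X ω} = 0 := by
    rw [measure_eq_zero_iff_ae_notMem]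
    filter_upwards [hM] with ω hω
    simp only [Set.mem_setOf_eq, not_lt]
    exact hω
  show P {ω | M < X ω} ≤ ENNReal.ofReal (1 - t)
  rw [this]
  exact zero_le

lemma varSet_bddBelow (X : Ω → ℝ) {t : ℝ} (ht : 0 < t) :
    BddBelow (VaRSet P X t) := by
  obtain ⟨x, hx⟩ := exists_tail_gt (P := P) X (c := ENNReal.ofReal (1 - t))
    (by rw [ENNReal.ofReal_lt_one]; linarith)
  refine ⟨x, fun y hy => ?_⟩
  by_contra hxy
  push_neg at hxy
  have := lt_of_le_of_lt hy (lt_of_lt_of_le hx (tail_anti X hxy.le))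
  exact lt_irrefl _ this

lemma VaR_congr {X Y : Ω → ℝ} (h : X =ᵐ[P] Y) (t : ℝ) : VaR P X t = VaR P Y t := by
  have : ∀ x : ℝ, P {ω | x < X ω} = P {ω | x < Y ω} := by
    intro x
    apply measure_congr
    filter_upwards [h] with ω hω
    show (x < X ω) = (x < Y ω)
    rw [hω]
  unfold VaR
  congr 1
  ext x
  simp only [Set.mem_setOf_eq, this]

lemma VaR_mono {X Y : Ω → ℝ} (hX : AEMeasurable X P) (hXY : X ≤ᵐ[P] Y) {t : ℝ} (ht : 0 < t)
    (hcase : t < 1 ∨ ∃ M, ∀ᵐ ω ∂P, Y ω ≤ M) (hYm : AEMeasurable Y P) :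
    VaR P X t ≤ VaR P Y t := by
  have hsub : VaRSet P Y t ⊆ VaRSet P X t := by
    intro x hx
    simp only [VaRSet, Set.mem_setOf_eq] at hx ⊢
    refine le_trans (measure_mono_ae ?_) hx
    filter_upwards [hXY] with ω hω hlt
    exact lt_of_lt_of_le hlt hω
  have hne : (VaRSet P Y t).Nonempty := by
    rcases hcase with h | ⟨M, hM⟩
    · exact varSet_nonempty_of_lt_one Y hYm h
    · exact varSet_nonempty_of_bdd Y hM
  exact csInf_le_csInf (varSet_bddBelow X ht) hne hsub

lemma VaR_add_const {X : Ω → ℝ} (hX : AEMeasurable X P) (c : ℝ) {t : ℝ} (ht : 0 < t)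
    (hcase : t < 1 ∨ ∃ M, ∀ᵐ ω ∂P, X ω ≤ M) :
    VaR P (fun ω => X ω + c) t = VaR P X t + c := by
  have hkey : ∀ x : ℝ, {ω | x < X ω + c} = {ω | x - c < X ω} := by
    intro x
    ext ω
    simp only [Set.mem_setOf_eq, sub_lt_iff_lt_add]
  have hset : ∀ x : ℝ, x ∈ VaRSet P (fun ω => X ω + c) t ↔ x - c ∈ VaRSet P X t := by
    intro x
    simp only [VaRSet, Set.mem_setOf_eq, hkey x]
  have hne : (VaRSet P X t).Nonempty := by
    rcases hcase with h | ⟨M, hM⟩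
    · exact varSet_nonempty_of_lt_one X hX h
    · exact varSet_nonempty_of_bdd X hM
  have hbdd : BddBelow (VaRSet P X t) := varSet_bddBelow X ht
  have hne' : (VaRSet P (fun ω => X ω + c) t).Nonempty := by
    obtain ⟨y, hy⟩ := hne
    exact ⟨y + c, (hset (y + c)).mpr (by simpa using hy)⟩
  have hbdd' : BddBelow (VaRSet P (fun ω => X ω + c) t) := by
    obtain ⟨b, hb⟩ := hbdd
    refine ⟨b + c, fun x hx => ?_⟩
    have := hb ((hset x).mp hx)
    linarith
  unfold VaR
  rw [show {x : ℝ | P {ω | x < X ω + c} ≤ ENNReal.ofReal (1 - t)}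
      = VaRSet P (fun ω => X ω + c) t from rfl,
    show {x : ℝ | P {ω | x < X ω} ≤ ENNReal.ofReal (1 - t)} = VaRSet P X t from rfl]
  apply le_antisymm
  · have h1 : ∀ y ∈ VaRSet P X t, sInf (VaRSet P (fun ω => X ω + c) t) ≤ y + c := by
      intro y hy
      exact csInf_le hbdd' ((hset (y + c)).mpr (by simpa using hy))
    have h2 : sInf (VaRSet P (fun ω => X ω + c) t) - c ≤ sInf (VaRSet P X t) :=
      le_csInf hne fun y hy => by linarith [h1 y hy]
    linarith
  · refine le_csInf hne' fun x hx => ?_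
    have := csInf_le hbdd ((hset x).mp hx)
    linarith

lemma VaR_smul (X : Ω → ℝ) {c : ℝ} (hc : 0 < c) (t : ℝ) :
    VaR P (fun ω => c * X ω) t = c * VaR P X t := by
  have hkey : ∀ x : ℝ, {ω | x < c * X ω} = {ω | c⁻¹ * x < X ω} := by
    intro x
    ext ω
    simp only [Set.mem_setOf_eq]
    rw [inv_mul_eq_div, div_lt_iff₀ hc, mul_comm]
  have hset : VaRSet P (fun ω => c * X ω) t = c • VaRSet P X t := by
    ext x
    rw [Set.mem_smul_set_iff_inv_smul_mem₀ hc.ne']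
    simp only [VaRSet, Set.mem_setOf_eq, smul_eq_mul, hkey x]
  unfold VaR
  rw [show {x : ℝ | P {ω | x < c * X ω} ≤ ENNReal.ofReal (1 - t)}
      = VaRSet P (fun ω => c * X ω) t from rfl, hset,
    Real.sInf_smul_of_nonneg hc.le]
  rfl

lemma VaR_const (c : ℝ) {t : ℝ} (ht : 0 < t) : VaR P (fun _ => c) t = c := by
  have hset : {x : ℝ | P {ω : Ω | x < c} ≤ ENNReal.ofReal (1 - t)} = Set.Ici c := by
    ext x
    simp only [Set.mem_setOf_eq, Set.mem_Ici]
    constructor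
    · intro h
      by_contra hx
      push_neg at hx
      have huniv : {ω : Ω | x < c} = Set.univ := Set.eq_univ_of_forall fun _ => hx
      rw [huniv, measure_univ] at h
      have : ENNReal.ofReal (1 - t) < 1 := by rw [ENNReal.ofReal_lt_one]; linarith
      exact absurd (lt_of_le_of_lt h this) (lt_irrefl _)
    · intro h
      have hempty : {ω : Ω | x < c} = ∅ := by
        ext ω; simp only [Set.mem_setOf_eq, Set.mem_empty_iff_false, iff_false, not_lt]; exact h
      rw [hempty, measure_empty]
      exact zero_le
  rw [VaR, hset, csInf_Ici]

end Helpers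

section Rho

variable {P : Measure Ω} [IsProbabilityMeasure P] {p : ℝ≥0∞} [Fact (1 ≤ p)]

lemma kernel_measure_Ioc (K : DistortionKernel) :
    K.toStieltjes.measure (Set.Ioc (0 : ℝ) 1) = 1 := by
  rw [StieltjesFunction.measure_Ioc, K.one_of_one_le 1 le_rfl, K.zero_of_nonpos 0 le_rfl]
  simp

/-- Dichotomy: either the kernel measure has no atom at 1, or every element of `Lp` is
essentially bounded above. -/
lemma kernel_dichotomy (K : DistortionKernel)
    (hfinK : ∀ X : Lp ℝ p P,
      IntegrableOn (fun t => VaR P (⇑X) t) (Set.Ioc 0 1) K.toStieltjes.measure)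
    (hcontK : Continuous fun X : Lp ℝ p P => distortionRisk P K ⇑X) :
    K.toStieltjes.measure {(1 : ℝ)} = 0 ∨
      ∀ X : Lp ℝ p P, ∃ M : ℝ, ∀ᵐ ω ∂P, X ω ≤ M := by
  set μ := K.toStieltjes.measure with hμ
  rw [or_iff_not_imp_right]
  intro h
  push_neg at h
  obtain ⟨Y₀, hY₀⟩ := h
  set Y : Lp ℝ p P := Lp.posPart Y₀ with hYdef
  have hYrep : ⇑Y =ᵐ[P] fun ω => max (Y₀ ω) 0 := Lp.coeFn_posPart Y₀
  have hYunbdd : ∀ M : ℝ, ¬ (∀ᵐ ω ∂P, Y ω ≤ M) := by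
    intro M hM
    refine hY₀ M ?_
    filter_upwards [hYrep, hM] with ω h1 h2
    apply not_lt.mpr
    calc Y₀ ω ≤ max (Y₀ ω) 0 := le_max_left _ _
      _ = Y ω := h1.symm
      _ ≤ M := h2
  set C1 : Lp ℝ p P := Lp.const p P 1 with hC1def
  have hC1rep : ⇑C1 =ᵐ[P] fun _ => (1 : ℝ) := Lp.coeFn_const p P 1
  -- ρ(C1) = 1
  have hrhoC1 : distortionRisk P K ⇑C1 = 1 := by
    have heq : Set.EqOn (fun t => VaR P (⇑C1) t) (fun _ => (1 : ℝ)) (Set.Ioc 0 1) := by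
      intro t ht
      simp only
      rw [VaR_congr hC1rep t, VaR_const 1 ht.1]
    rw [distortionRisk, setIntegral_congr_fun measurableSet_Ioc heq, setIntegral_const, measureReal_def,
      kernel_measure_Ioc K]
    simp
  -- the approximating sequence
  set a : ℕ → ℝ := fun k => 1 / (k + 1) with hadef
  have ha_pos : ∀ k, (0 : ℝ) < a k := fun k => by positivity
  set Xk : ℕ → Lp ℝ p P := fun k => C1 + a k • Y with hXkdef
  have hXkrep : ∀ k, ⇑(Xk k) =ᵐ[P] fun ω => a k * Y ω + 1 := by
    intro k
    filter_upwards [Lp.coeFn_add C1 (a k • Y), Lp.coeFn_smul (a k) Y, hC1rep] with ω h1 h2 h3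
    simp only [hXkdef] at h1 ⊢
    rw [h1]
    simp only [Pi.add_apply, h3, h2, Pi.smul_apply, smul_eq_mul]
    ring
  -- VaR of Xk at t = 1 is junk 0
  have hVaR1 : ∀ k, VaR P (⇑(Xk k)) 1 = 0 := by
    intro k
    have hempty : {x : ℝ | P {ω | x < (Xk k) ω} ≤ ENNReal.ofReal (1 - 1)} = ∅ := by
      rw [Set.eq_empty_iff_forall_notMem]
      intro x hx
      simp only [sub_self, ENNReal.ofReal_zero, Set.mem_setOf_eq, le_zero_iff] at hx
      have hae : ∀ᵐ ω ∂P, ¬ x < (Xk k) ω := measure_eq_zero_iff_ae_notMem.mp hx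
      refine hYunbdd ((x - 1) / a k) ?_
      filter_upwards [hae, hXkrep k] with ω h1 h2
      rw [h2] at h1
      push_neg at h1
      rw [le_div_iff₀ (ha_pos k), mul_comm]
      linarith
    rw [VaR, hempty, Real.sInf_empty]
  -- formula for ρ(Xk)
  set c₀ : ℝ := ∫ t in Set.Ioo (0 : ℝ) 1, VaR P (⇑Y) t ∂μ with hc₀def
  have hIooIoc : Set.Ioo (0 : ℝ) 1 ⊆ Set.Ioc (0 : ℝ) 1 := Set.Ioo_subset_Ioc_self
  have h1Ioc : ({1} : Set ℝ) ⊆ Set.Ioc (0 : ℝ) 1 := by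
    simp only [Set.singleton_subset_iff, Set.mem_Ioc]
    exact ⟨zero_lt_one, le_rfl⟩
  have hdisj : Disjoint (Set.Ioo (0 : ℝ) 1) ({1} : Set ℝ) := by
    rw [Set.disjoint_singleton_right]
    simp
  have hunion : Set.Ioo (0 : ℝ) 1 ∪ {1} = Set.Ioc (0 : ℝ) 1 := Set.Ioo_union_right zero_lt_one
  have hrhoXk : ∀ k, distortionRisk P K ⇑(Xk k) = (μ (Set.Ioo 0 1)).toReal + a k * c₀ := by
    intro k
    have hint := hfinK (Xk k)
    rw [distortionRisk, ← hunion,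
      setIntegral_union hdisj (measurableSet_singleton 1)
        ((hint.mono_set hIooIoc)) ((hint.mono_set h1Ioc))]
    have hsing : ∫ t in ({1} : Set ℝ), VaR P (⇑(Xk k)) t ∂μ = 0 := by
      rw [Measure.restrict_singleton, integral_smul_measure, integral_dirac, hVaR1 k]
      simp
    have hIoo : ∫ t in Set.Ioo (0 : ℝ) 1, VaR P (⇑(Xk k)) t ∂μ
        = (μ (Set.Ioo 0 1)).toReal + a k * c₀ := by
      have heq : Set.EqOn (fun t => VaR P (⇑(Xk k)) t)
          (fun t => 1 + a k * VaR P (⇑Y) t) (Set.Ioo 0 1) := by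
        intro t ht
        simp only
        have hmeas : AEMeasurable (fun ω => a k * Y ω) P :=
          ((Lp.aestronglyMeasurable Y).aemeasurable).const_mul (a k)
        rw [VaR_congr (hXkrep k) t, VaR_add_const hmeas 1 ht.1 (Or.inl ht.2),
          VaR_smul (⇑Y) (ha_pos k) t]
        ring
      rw [setIntegral_congr_fun measurableSet_Ioo heq]
      have hconst : IntegrableOn (fun _ : ℝ => (1 : ℝ)) (Set.Ioo 0 1) μ := by
        refine (integrableOn_const_iff).mpr (Or.inr ?_)
        exact lt_of_le_of_lt (measure_mono hIooIoc) (by rw [kernel_measure_Ioc K]; exact ENNReal.one_lt_top)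
      have hY' : IntegrableOn (fun t => a k * VaR P (⇑Y) t) (Set.Ioo 0 1) μ :=
        ((hfinK Y).mono_set hIooIoc).const_mul (a k)
      rw [integral_add hconst hY', setIntegral_const, integral_const_mul]
      simp [hc₀def]
      rfl
    rw [hIoo, hsing, add_zero]
  -- two limits
  have hXk_tendsto : Tendsto Xk atTop (𝓝 C1) := by
    have h1 : Tendsto a atTop (𝓝 0) := tendsto_one_div_add_atTop_nhds_zero_nat
    have h2 : Tendsto (fun k => a k • Y) atTop (𝓝 ((0 : ℝ) • Y)) := h1.smul_const Y
    rw [zero_smul] at h2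
    have h3 := h2.const_add C1
    rw [add_zero] at h3
    exact h3
  have hlim1 : Tendsto (fun k => distortionRisk P K ⇑(Xk k)) atTop (𝓝 1) := by
    have := (hcontK.tendsto C1).comp hXk_tendsto
    rwa [hrhoC1] at this
  have hlim2 : Tendsto (fun k => distortionRisk P K ⇑(Xk k)) atTop
      (𝓝 ((μ (Set.Ioo 0 1)).toReal)) := by
    have h1 : Tendsto a atTop (𝓝 0) := tendsto_one_div_add_atTop_nhds_zero_nat
    have h2 : Tendsto (fun k => (μ (Set.Ioo 0 1)).toReal + a k * c₀) atTop
        (𝓝 ((μ (Set.Ioo 0 1)).toReal + 0 * c₀)) :=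
      tendsto_const_nhds.add (h1.mul_const c₀)
    rw [zero_mul, add_zero] at h2
    refine h2.congr fun k => (hrhoXk k).symm
  have hIooTo : (μ (Set.Ioo 0 1)).toReal = 1 := tendsto_nhds_unique hlim2 hlim1
  have hIooOne : μ (Set.Ioo 0 1) = 1 := ENNReal.toReal_eq_one_iff _ |>.mp hIooTo
  have hsum : μ (Set.Ioo 0 1) + μ ({1} : Set ℝ) = 1 := by
    rw [← measure_union hdisj (measurableSet_singleton 1), hunion, kernel_measure_Ioc K]
  rw [hIooOne] at hsum
  have h0 : (1 : ℝ≥0∞) + μ ({1} : Set ℝ) = 1 + 0 := by rw [add_zero, hsum]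
  exact (ENNReal.add_right_inj ENNReal.one_ne_top).mp h0

/-- Master a.e. lemma on `Ioc 0 1`. -/
lemma ae_Ioc_of_dichotomy (K : DistortionKernel)
    (hgood : K.toStieltjes.measure {(1 : ℝ)} = 0 ∨
      ∀ X : Lp ℝ p P, ∃ M : ℝ, ∀ᵐ ω ∂P, X ω ≤ M)
    (Q : ℝ → Prop) (h1 : ∀ t, 0 < t → t < 1 → Q t)
    (h2 : (∀ X : Lp ℝ p P, ∃ M : ℝ, ∀ᵐ ω ∂P, X ω ≤ M) → Q 1) :
    ∀ᵐ t ∂(K.toStieltjes.measure.restrict (Set.Ioc 0 1)), Q t := by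
  set μ := K.toStieltjes.measure
  rcases hgood with hatom | hbdd
  · have hmem : ∀ᵐ t ∂(μ.restrict (Set.Ioc 0 1)), t ∈ Set.Ioc (0 : ℝ) 1 :=
      ae_restrict_mem measurableSet_Ioc
    have hne1 : ∀ᵐ t ∂(μ.restrict (Set.Ioc 0 1)), t ≠ 1 := by
      have hz : (μ.restrict (Set.Ioc 0 1)) {(1 : ℝ)} = 0 := by
        rw [Measure.restrict_apply (measurableSet_singleton 1)]
        exact le_antisymm (le_trans (measure_mono Set.inter_subset_left) hatom.le) zero_le
      have := measure_eq_zero_iff_ae_notMem.mp hz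
      filter_upwards [this] with t ht
      simpa using ht
    filter_upwards [hmem, hne1] with t ht hne
    exact h1 t ht.1 (lt_of_le_of_ne ht.2 hne)
  · filter_upwards [ae_restrict_mem measurableSet_Ioc] with t ht
    rcases lt_or_eq_of_le ht.2 with h | h
    · exact h1 t ht.1 h
    · rw [h]; exact h2 hbdd

lemma rho_mono (K : DistortionKernel)
    (hfinK : ∀ X : Lp ℝ p P,
      IntegrableOn (fun t => VaR P (⇑X) t) (Set.Ioc 0 1) K.toStieltjes.measure)
    (hgood : K.toStieltjes.measure {(1 : ℝ)} = 0 ∨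
      ∀ X : Lp ℝ p P, ∃ M : ℝ, ∀ᵐ ω ∂P, X ω ≤ M)
    (X Y : Lp ℝ p P) (hXY : ⇑X ≤ᵐ[P] ⇑Y) :
    distortionRisk P K ⇑X ≤ distortionRisk P K ⇑Y := by
  refine integral_mono_ae (hfinK X) (hfinK Y) ?_
  refine ae_Ioc_of_dichotomy K hgood (fun t => VaR P (⇑X) t ≤ VaR P (⇑Y) t) ?_ ?_
  · intro t ht1 ht2
    exact VaR_mono (Lp.aestronglyMeasurable X).aemeasurable hXY ht1 (Or.inl ht2)
      (Lp.aestronglyMeasurable Y).aemeasurable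
  · intro hb
    exact VaR_mono (Lp.aestronglyMeasurable X).aemeasurable hXY zero_lt_one (Or.inr (hb Y))
      (Lp.aestronglyMeasurable Y).aemeasurable

lemma rho_add_const (K : DistortionKernel)
    (hfinK : ∀ X : Lp ℝ p P,
      IntegrableOn (fun t => VaR P (⇑X) t) (Set.Ioc 0 1) K.toStieltjes.measure)
    (hgood : K.toStieltjes.measure {(1 : ℝ)} = 0 ∨
      ∀ X : Lp ℝ p P, ∃ M : ℝ, ∀ᵐ ω ∂P, X ω ≤ M)
    (X : Lp ℝ p P) (c : ℝ) :
    distortionRisk P K ⇑(X + Lp.const p P c) = distortionRisk P K ⇑X + c := by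
  have hrep : ⇑(X + Lp.const p P c) =ᵐ[P] fun ω => X ω + c := by
    filter_upwards [Lp.coeFn_add X (Lp.const p P c), Lp.coeFn_const p P c] with ω h1 h2
    rw [h1]
    simp only [Pi.add_apply, h2, Function.const_apply]
  have hXm : AEMeasurable (⇑X) P := (Lp.aestronglyMeasurable X).aemeasurable
  have hae : ∀ᵐ t ∂(K.toStieltjes.measure.restrict (Set.Ioc 0 1)),
      VaR P (⇑(X + Lp.const p P c)) t = VaR P (⇑X) t + c := by
    refine ae_Ioc_of_dichotomy K hgood _ ?_ ?_
    · intro t ht1 ht2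
      rw [VaR_congr hrep t, VaR_add_const hXm c ht1 (Or.inl ht2)]
    · intro hb
      rw [VaR_congr hrep 1, VaR_add_const hXm c zero_lt_one (Or.inr (hb X))]
  have hconst : IntegrableOn (fun _ : ℝ => c) (Set.Ioc 0 1) K.toStieltjes.measure := by
    refine (integrableOn_const_iff).mpr (Or.inr ?_)
    rw [kernel_measure_Ioc K]
    exact ENNReal.one_lt_top
  rw [distortionRisk, integral_congr_ae hae, integral_add (hfinK X) hconst, setIntegral_const, measureReal_def,
    kernel_measure_Ioc K]
  simp [distortionRisk]

lemma rho_smul (K : DistortionKernel) (X : Lp ℝ p P) {c : ℝ} (hc : 0 < c) :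
    distortionRisk P K ⇑(c • X) = c * distortionRisk P K ⇑X := by
  have hrep : ⇑(c • X) =ᵐ[P] fun ω => c * X ω := by
    filter_upwards [Lp.coeFn_smul c X] with ω h1
    rw [h1]
    simp
  have heq : (fun t => VaR P (⇑(c • X)) t) = fun t => c * VaR P (⇑X) t :=
    funext fun t => by rw [VaR_congr hrep t, VaR_smul (⇑X) hc t]
  rw [distortionRisk, heq, integral_const_mul]
  rfl

end Rho

theorem stmt7 (P : Measure Ω) [IsProbabilityMeasure P]
    (p : ℝ≥0∞) [Fact (1 ≤ p)] (hp : p ≠ ∞)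
    (n : ℕ) (K : Fin n → DistortionKernel)
    (hfin : ∀ i (X : Lp ℝ p P),
      IntegrableOn (fun t => VaR P (⇑X) t) (Set.Ioc 0 1) (K i).toStieltjes.measure)
    (hcont : ∀ i, Continuous fun X : Lp ℝ p P => distortionRisk P (K i) ⇑X)
    (lam : Fin n → ℝ) (hlam : ∀ i, 0 < lam i)
    (X₀ : Lp ℝ p P) (m₀ : ℝ) (hbd₀ : ∀ᵐ ω ∂P, m₀ ≤ X₀ ω)
    (hbdd : BddBelow {r : ℝ | ∃ Xs : Fin n → Lp ℝ p P, ∑ i, Xs i = X₀ ∧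
        r = ∑ i, lam i * distortionRisk P (K i) ⇑(Xs i)}) :
    ∀ (X₀' : Lp ℝ p P) (m' : ℝ), (∀ᵐ ω ∂P, m' ≤ X₀' ω) →
      BddBelow {r : ℝ | ∃ Xs : Fin n → Lp ℝ p P, ∑ i, Xs i = X₀' ∧
        r = ∑ i, lam i * distortionRisk P (K i) ⇑(Xs i)} := by
  intro X₀' m' hm'
  rcases Nat.eq_zero_or_pos n with hn | hn
  · subst hn
    refine ⟨0, fun r hr => ?_⟩
    obtain ⟨Xs, -, rfl⟩ := hr
    simp
  · obtain ⟨B, hB⟩ := hbdd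
    have hgood : ∀ i, (K i).toStieltjes.measure {(1 : ℝ)} = 0 ∨
        ∀ X : Lp ℝ p P, ∃ M : ℝ, ∀ᵐ ω ∂P, X ω ≤ M :=
      fun i => kernel_dichotomy (K i) (hfin i) (hcont i)
    -- Step 1: nonnegativity on zero-sum families
    have diamond : ∀ U : Fin n → Lp ℝ p P, (∑ i, U i = 0) →
        0 ≤ ∑ i, lam i * distortionRisk P (K i) ⇑(U i) := by
      intro U hU
      set i₀ : Fin n := ⟨0, hn⟩
      set d : Fin n → Lp ℝ p P := fun i => if i = i₀ then X₀ else 0 with hd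
      have hdsum : ∑ i, d i = X₀ := by
        simp [hd, Finset.sum_ite_eq']
      set V : ℕ → Fin n → Lp ℝ p P := fun k i => U i + ((1 : ℝ)/(k + 1)) • d i with hV
      have key : ∀ k : ℕ, B / ((k : ℝ) + 1)
          ≤ ∑ i, lam i * distortionRisk P (K i) ⇑(V k i) := by
        intro k
        have hk : (0 : ℝ) < (k : ℝ) + 1 := by positivity
        have hsumV : ∑ i, ((k : ℝ) + 1) • V k i = X₀ := by
          have hone : ((k : ℝ) + 1) * ((1 : ℝ)/(k + 1)) = 1 := by field_simp
          simp only [hV, smul_add, smul_smul, hone, one_smul]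
          rw [Finset.sum_add_distrib, ← Finset.smul_sum, hU, smul_zero, zero_add, hdsum]
        have hmem : (∑ i, lam i * distortionRisk P (K i) ⇑((((k : ℝ) + 1)) • V k i))
            ∈ {r : ℝ | ∃ Xs : Fin n → Lp ℝ p P, ∑ i, Xs i = X₀ ∧
              r = ∑ i, lam i * distortionRisk P (K i) ⇑(Xs i)} :=
          ⟨fun i => ((k : ℝ) + 1) • V k i, hsumV, rfl⟩
        have h1 := hB hmem
        have h2 : ∑ i, lam i * distortionRisk P (K i) ⇑((((k : ℝ) + 1)) • V k i)
            = ((k : ℝ) + 1) * ∑ i, lam i * distortionRisk P (K i) ⇑(V k i) := by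
          rw [Finset.mul_sum]
          refine Finset.sum_congr rfl fun i _ => ?_
          rw [rho_smul (K i) (V k i) hk]
          ring
        rw [h2] at h1
        rw [div_le_iff₀ hk, mul_comm]
        exact h1
      have hlim1 : Tendsto (fun k : ℕ => ∑ i, lam i * distortionRisk P (K i) ⇑(V k i)) atTop
          (𝓝 (∑ i, lam i * distortionRisk P (K i) ⇑(U i))) := by
        refine tendsto_finset_sum _ fun i _ => ?_
        have h1 : Tendsto (fun k : ℕ => (1 : ℝ)/(k + 1)) atTop (𝓝 0) :=
          tendsto_one_div_add_atTop_nhds_zero_nat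
        have h2 : Tendsto (fun k : ℕ => ((1 : ℝ)/(k + 1)) • d i) atTop (𝓝 ((0 : ℝ) • d i)) :=
          h1.smul_const (d i)
        rw [zero_smul] at h2
        have h3 := h2.const_add (U i)
        rw [add_zero] at h3
        exact (((hcont i).tendsto (U i)).comp h3).const_mul (lam i)
      have hlim2 : Tendsto (fun k : ℕ => B / ((k : ℝ) + 1)) atTop (𝓝 0) := by
        have h1 : Tendsto (fun k : ℕ => (1 : ℝ)/(k + 1)) atTop (𝓝 0) :=
          tendsto_one_div_add_atTop_nhds_zero_nat
        have h2 := h1.const_mul B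
        rw [mul_zero] at h2
        exact h2.congr fun k => mul_one_div B ((k : ℝ) + 1)
      exact le_of_tendsto_of_tendsto' hlim2 hlim1 key
    -- Step 2: the explicit lower bound
    refine ⟨m' * (n : ℝ)⁻¹ * ∑ i, lam i, fun r hr => ?_⟩
    obtain ⟨Xs, hsum, rfl⟩ := hr
    set c : ℝ := (n : ℝ)⁻¹ with hc
    have hcpos : (0 : ℝ) < c := inv_pos.mpr (Nat.cast_pos.mpr hn)
    set U : Fin n → Lp ℝ p P := fun i => Xs i - c • X₀' with hUdef
    have hUsum : ∑ i, U i = 0 := by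
      simp only [hUdef]
      rw [Finset.sum_sub_distrib, hsum, Finset.sum_const, Finset.card_univ, Fintype.card_fin,
        ← Nat.cast_smul_eq_nsmul ℝ n (c • X₀'), smul_smul,
        show (n : ℝ) * c = 1 from mul_inv_cancel₀ (Nat.cast_ne_zero.mpr hn.ne'), one_smul,
        sub_self]
    have hlow : ∀ i, distortionRisk P (K i) ⇑(U i) + c * m'
        ≤ distortionRisk P (K i) ⇑(Xs i) := by
      intro i
      have h1 : distortionRisk P (K i) ⇑(U i + Lp.const p P (c * m'))
          ≤ distortionRisk P (K i) ⇑(Xs i) := by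
        refine rho_mono (K i) (hfin i) (hgood i) _ _ ?_
        filter_upwards [Lp.coeFn_add (U i) (Lp.const p P (c * m')), Lp.coeFn_const p P (c * m'),
          Lp.coeFn_sub (Xs i) (c • X₀'), Lp.coeFn_smul c X₀', hm'] with ω e1 e2 e3 e4 hω
        have e5 : (U i) ω = Xs i ω - c * X₀' ω := by
          have : (U i) ω = (Xs i - c • X₀') ω := rfl
          rw [this, e3]
          simp only [Pi.sub_apply, e4, Pi.smul_apply, smul_eq_mul]
        rw [e1]
        simp only [Pi.add_apply, e2, Function.const_apply, e5]
        have : c * m' ≤ c * X₀' ω := mul_le_mul_of_nonneg_left hω hcpos.le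
        linarith
      rwa [rho_add_const (K i) (hfin i) (hgood i) (U i) (c * m')] at h1
    have step2 : ∑ i, lam i * (distortionRisk P (K i) ⇑(U i) + c * m')
        ≤ ∑ i, lam i * distortionRisk P (K i) ⇑(Xs i) :=
      Finset.sum_le_sum fun i _ => mul_le_mul_of_nonneg_left (hlow i) (hlam i).le
    have expand : ∑ i, lam i * (distortionRisk P (K i) ⇑(U i) + c * m')
        = (∑ i, lam i * distortionRisk P (K i) ⇑(U i)) + (c * m') * ∑ i, lam i := by
      rw [Finset.mul_sum]
      rw [← Finset.sum_add_distrib]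
      refine Finset.sum_congr rfl fun i _ => ?_
      ring
    have hdia := diamond U hUsum
    calc m' * (n : ℝ)⁻¹ * ∑ i, lam i = (c * m') * ∑ i, lam i := by rw [hc]; ring
      _ ≤ (∑ i, lam i * distortionRisk P (K i) ⇑(U i)) + (c * m') * ∑ i, lam i :=
          le_add_of_nonneg_left hdia
      _ = ∑ i, lam i * (distortionRisk P (K i) ⇑(U i) + c * m') := expand.symm
      _ ≤ ∑ i, lam i * distortionRisk P (K i) ⇑(Xs i) := step2

end
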